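/- Let n ≥ 2 and let A = 2^{1/n}·M, where M is the real n×n matrix with M_{ii} = 1 for 1 ≤ i ≤ n−1, M_{in} = 1/2 for 1 ≤ i ≤ n, and all other entries 0 (so det A = 1). Then for every integer vector v ∈ ℤⁿ whose last coordinate vₙ is odd, one has ‖Av‖ ≥ 2^{1/n}·√n/2. -/

import Mathlib

/-- The Euclidean norm of a vector in `ℝⁿ`. -/
noncomputable def eNorm {n : ℕ} (x : Fin n → ℝ) : ℝ :=
  Real.sqrt (∑ i, (x i) ^ 2)

/-- The Euclidean norm of `A v` for an integer vector `v`. -/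
noncomputable def latNorm {n : ℕ} (A : Matrix (Fin n) (Fin n) ℝ) (v : Fin n → ℤ) : ℝ :=
  eNorm (A.mulVec (fun i => (v i : ℝ)))

/-- The systole of `A`: the infimum (in fact minimum) of `‖A v‖` over nonzero
integer vectors `v ∈ ℤⁿ`. -/
noncomputable def syst {n : ℕ} (A : Matrix (Fin n) (Fin n) ℝ) : ℝ :=
  sInf {r | ∃ v : Fin n → ℤ, v ≠ 0 ∧ r = latNorm A v}

/-- The matrix `M` with `M i i = 1` for `i` in the upper-left `(n-1) × (n-1)` block,
last column constantly `1/2`, and all other entries `0`. -/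
noncomputable def Mmat (n : ℕ) : Matrix (Fin n) (Fin n) ℝ :=
  Matrix.of fun i j => if (j : ℕ) = n - 1 then 1 / 2 else if i = j then 1 else 0

/-- The matrix `A = 2^(1/n) • M` (which has determinant `1`). -/
noncomputable def Amat (n : ℕ) : Matrix (Fin n) (Fin n) ℝ :=
  ((2 : ℝ) ^ ((1 : ℝ) / n)) • Mmat n

lemma int_half_sq {t : ℤ} : (1/4 : ℝ) ≤ ((t : ℝ) + 1/2) ^ 2 := by
  have h : (0 : ℤ) ≤ t * (t + 1) := by
    rcases le_or_gt 0 t with h | h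
    · exact mul_nonneg h (by omega)
    · nlinarith
  have h' : (0 : ℝ) ≤ (t : ℝ) * ((t : ℝ) + 1) := by exact_mod_cast h
  nlinarith [h']

lemma mulVecM {n : ℕ} (hn : 2 ≤ n) (v : Fin n → ℤ) (i : Fin n) :
    (Mmat n).mulVec (fun i => (v i : ℝ)) i =
      (if i = (⟨n - 1, Nat.sub_lt (by omega) one_pos⟩ : Fin n) then 0 else (v i : ℝ)) +
        (v (⟨n - 1, Nat.sub_lt (by omega) one_pos⟩ : Fin n) : ℝ) / 2 := by
  set last : Fin n := ⟨n - 1, Nat.sub_lt (by omega) one_pos⟩ with hlast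
  have hlv : (last : ℕ) = n - 1 := rfl
  unfold Matrix.mulVec dotProduct
  rcases eq_or_ne i last with hi | hi
  · rw [if_pos hi, hi]
    rw [Finset.sum_eq_single last]
    · simp only [Mmat, Matrix.of_apply, hlv, if_pos rfl]
      norm_num; ring
    · intro j _ hj
      have h1 : (j : ℕ) ≠ n - 1 := fun h => hj (Fin.ext (by simp [hlv, h]))
      have h2 : last ≠ j := fun h => hj h.symm
      simp [Mmat, h1, h2]
    · simp
  · rw [if_neg hi]
    rw [← Finset.sum_erase_add _ _ (Finset.mem_univ last)]
    have h1 : Mmat n i last * (v last : ℝ) = (v last : ℝ) / 2 := by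
      simp only [Mmat, Matrix.of_apply, hlv, if_pos rfl]; norm_num; ring
    have h2 : ∑ j ∈ Finset.univ.erase last, Mmat n i j * (v j : ℝ) = (v i : ℝ) := by
      rw [Finset.sum_eq_single_of_mem i (Finset.mem_erase.2 ⟨hi, Finset.mem_univ i⟩)]
      · have hiv : (i : ℕ) ≠ n - 1 := fun h => hi (Fin.ext (by simp [hlv, h]))
        simp [Mmat, hiv]
      · intro j hj hji
        have hjl : j ≠ last := (Finset.mem_erase.1 hj).1
        have h1 : (j : ℕ) ≠ n - 1 := fun h => hjl (Fin.ext (by simp [hlv, h]))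
        have h2 : i ≠ j := fun h => hji h.symm
        simp [Mmat, h1, h2]
    rw [h1, h2]

/-- For `A = 2^(1/n) • M`, every integer vector whose last coordinate is odd satisfies
`‖A v‖ ≥ 2^(1/n) · √n / 2`. -/
theorem norm_ge_of_odd_last {n : ℕ} (hn : 2 ≤ n) (v : Fin n → ℤ)
    (hodd : Odd (v ⟨n - 1, by omega⟩)) :
    (2 : ℝ) ^ ((1 : ℝ) / n) * Real.sqrt n / 2 ≤ latNorm (Amat n) v := by
  set c : ℝ := (2 : ℝ) ^ ((1 : ℝ) / n) with hc
  have hcpos : 0 < c := Real.rpow_pos_of_pos (by norm_num) _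
  set last : Fin n := ⟨n - 1, by omega⟩ with hlast
  obtain ⟨m, hm⟩ := hodd
  -- each coordinate of M v squared is ≥ 1/4
  have hcoord : ∀ i : Fin n, (1/4 : ℝ) ≤ ((Mmat n).mulVec (fun i => (v i : ℝ)) i) ^ 2 := by
    intro i
    rw [mulVecM hn v i]
    set k : ℤ := (if i = last then 0 else v i) with hk
    have : (if i = last then (0:ℝ) else (v i : ℝ)) + (v last : ℝ) / 2
        = ((k + m : ℤ) : ℝ) + 1/2 := by
      have : (v last : ℝ) = 2 * (m : ℝ) + 1 := by
        rw [show v last = 2 * m + 1 from hm]; push_cast; ring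
      rw [this, hk]
      split_ifs <;> push_cast <;> ring
    rw [this]
    exact int_half_sq
  have hAv : ∀ i : Fin n, (Amat n).mulVec (fun i => (v i : ℝ)) i
      = c * (Mmat n).mulVec (fun i => (v i : ℝ)) i := by
    intro i
    rw [Amat, Matrix.smul_mulVec]
    rfl
  have hsum : c ^ 2 * ((n : ℝ) / 4) ≤ ∑ i, ((Amat n).mulVec (fun i => (v i : ℝ)) i) ^ 2 := by
    calc c ^ 2 * ((n : ℝ) / 4) = ∑ _i : Fin n, c ^ 2 * (1/4 : ℝ) := by
          rw [Finset.sum_const]; simp; ring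
      _ ≤ ∑ i, ((Amat n).mulVec (fun i => (v i : ℝ)) i) ^ 2 := by
          apply Finset.sum_le_sum
          intro i _
          rw [hAv i, mul_pow]
          exact mul_le_mul_of_nonneg_left (hcoord i) (by positivity)
  unfold latNorm eNorm
  have h1 : c * Real.sqrt n / 2 = Real.sqrt (c ^ 2 * ((n : ℝ) / 4)) := by
    rw [Real.sqrt_mul (by positivity), Real.sqrt_sq hcpos.le,
      show (n : ℝ) / 4 = (n : ℝ) * (1/2)^2 by ring,
      Real.sqrt_mul (by positivity), Real.sqrt_sq (by norm_num)]
    ring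
  rw [h1]
  exact Real.sqrt_le_sqrt hsum
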